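/- The map Φ_n sending a Bernoulli path S of length n to the simple chain H of length n+1 defined by ΔH_i = 1 if ΔS_i ≠ ΔS_{i-1} and ΔH_i = 0 otherwise (with conventions ΔS_0 = -1 and ΔS_{n+1} = +1), restricted to paths with exactly k peaks, is a bijection onto the set of nondecreasing 0/1-increment chains H of length n+1 with H_0 = 0 and H_{n+1} = 2k+1. -/

import Mathlib

/-- The value at time `i` of the Bernoulli path with `n` steps encoded by
`f : Fin n → Bool` (`true` = step `+1`, `false` = step `-1`), started at `0`. -/
def pathVal {n : ℕ} (f : Fin n → Bool) (i : ℕ) : ℤ :=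
  ∑ j ∈ Finset.range i, (if h : j < n then (if f ⟨j, h⟩ then (1 : ℤ) else -1) else 0)

/-- `x` is a peak: `1 ≤ x ≤ n-1` and `S(x-1) = S(x+1) = S(x) - 1`. -/
def IsPeak {n : ℕ} (f : Fin n → Bool) (x : ℕ) : Prop :=
  0 < x ∧ x < n ∧ pathVal f x = pathVal f (x - 1) + 1 ∧
    pathVal f (x + 1) = pathVal f x - 1

instance {n : ℕ} (f : Fin n → Bool) (x : ℕ) : Decidable (IsPeak f x) := by
  unfold IsPeak; infer_instance

/-- Number of peaks of the path encoded by `f`. -/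
def numPeaks {n : ℕ} (f : Fin n → Bool) : ℕ :=
  ((Finset.range n).filter (fun x => IsPeak f x)).card

/-- The extended step sequence of the path encoded by `f`: `ΔS_i` for
`1 ≤ i ≤ n` is the `i`-th step, with the conventions `ΔS_0 = -1` (`false`)
and `ΔS_i = +1` (`true`) for `i ≥ n + 1`. -/
def stepExt {n : ℕ} (f : Fin n → Bool) (i : ℕ) : Bool :=
  if h : 1 ≤ i ∧ i ≤ n then f ⟨i - 1, by omega⟩ else decide (n + 1 ≤ i)

/-- The map `Φₙ` from Bernoulli paths with `n` steps to simple chains with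
`n+1` steps (encoded by their 0/1 increments): `ΔH_i = 1` iff
`ΔS_i ≠ ΔS_{i-1}`, with `ΔS_0 = -1`, `ΔS_{n+1} = +1`. -/
def Phi {n : ℕ} (f : Fin n → Bool) : Fin (n + 1) → Bool :=
  fun i => stepExt f ((i : ℕ) + 1) != stepExt f (i : ℕ)

/-- The value `H_j` of the simple chain encoded by the 0/1 increments `g`. -/
def chainVal {n : ℕ} (g : Fin (n + 1) → Bool) (j : ℕ) : ℕ :=
  ∑ i ∈ Finset.range j, (if h : i < n + 1 then (if g ⟨i, h⟩ then 1 else 0) else 0)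

lemma stepExt_zero {n : ℕ} (f : Fin n → Bool) : stepExt f 0 = false := by
  simp [stepExt]

lemma stepExt_top {n : ℕ} (f : Fin n → Bool) {i : ℕ} (h : n + 1 ≤ i) :
    stepExt f i = true := by
  rw [stepExt, dif_neg (by omega)]
  simpa using h

lemma stepExt_mid {n : ℕ} (f : Fin n → Bool) {x : ℕ} (h1 : 0 < x) (h2 : x ≤ n) :
    stepExt f x = f ⟨x - 1, by omega⟩ := by
  rw [stepExt, dif_pos ⟨h1, h2⟩]

lemma pathVal_succ {n : ℕ} (f : Fin n → Bool) (x : ℕ) :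
    pathVal f (x + 1) = pathVal f x +
      (if h : x < n then (if f ⟨x, h⟩ then (1 : ℤ) else -1) else 0) :=
  Finset.sum_range_succ _ _

lemma chainVal_succ {n : ℕ} (g : Fin (n + 1) → Bool) (x : ℕ) :
    chainVal g (x + 1) = chainVal g x +
      (if h : x < n + 1 then (if g ⟨x, h⟩ then 1 else 0) else 0) :=
  Finset.sum_range_succ _ _

lemma isPeak_iff {n : ℕ} (f : Fin n → Bool) (x : ℕ) :
    IsPeak f x ↔ stepExt f x = true ∧ stepExt f (x + 1) = false := by
  constructor
  · rintro ⟨hx, hxn, h1, h2⟩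
    obtain ⟨y, rfl⟩ : ∃ y, x = y + 1 := ⟨x - 1, by omega⟩
    rw [pathVal_succ, Nat.add_sub_cancel, dif_pos (by omega : y < n)] at h1
    rw [pathVal_succ, dif_pos (by omega : y + 1 < n)] at h2
    have hy : f ⟨y, by omega⟩ = true := by
      cases hfy : f ⟨y, by omega⟩
      · rw [hfy] at h1; simp at h1
      · rfl
    have hy1 : f ⟨y + 1, by omega⟩ = false := by
      cases hfy : f ⟨y + 1, by omega⟩
      · rfl
      · rw [hfy] at h2; simp at h2; linarith
    constructor
    · rw [stepExt_mid f (by omega) (by omega)]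
      exact hy
    · rw [stepExt_mid f (by omega) (by omega)]
      exact hy1
  · rintro ⟨h1, h2⟩
    have hxn : x < n := by
      by_contra hc
      rw [stepExt_top f (by omega)] at h2
      exact absurd h2 (by simp)
    have hx : 0 < x := by
      rcases Nat.eq_zero_or_pos x with h | h
      · rw [h, stepExt_zero] at h1; exact absurd h1 (by simp)
      · exact h
    obtain ⟨y, rfl⟩ : ∃ y, x = y + 1 := ⟨x - 1, by omega⟩
    rw [stepExt_mid f (by omega) (by omega)] at h1
    rw [stepExt_mid f (by omega) (by omega)] at h2
    refine ⟨hx, hxn, ?_, ?_⟩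
    · rw [pathVal_succ, Nat.add_sub_cancel, dif_pos (by omega : y < n)]
      have : f ⟨y, by omega⟩ = true := h1
      rw [this]; simp
    · rw [pathVal_succ, dif_pos (by omega : y + 1 < n)]
      have : f ⟨y + 1, by omega⟩ = false := h2
      rw [this]; simp; ring

lemma chainVal_phi {n : ℕ} (f : Fin n → Bool) :
    chainVal (Phi f) (n + 1) = 2 * numPeaks f + 1 := by
  set s : ℕ → Bool := stepExt f with hs
  have hs0 : s 0 = false := stepExt_zero f
  have hstop : s (n + 1) = true := stepExt_top f le_rfl
  set D : ℕ := ∑ x ∈ Finset.range (n + 1),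
    (if s x = true ∧ s (x + 1) = false then 1 else 0) with hD
  set U : ℕ := ∑ x ∈ Finset.range (n + 1),
    (if s x = false ∧ s (x + 1) = true then 1 else 0) with hU
  have hDpeaks : numPeaks f = D := by
    rw [numPeaks, Finset.card_filter, hD, Finset.sum_range_succ,
      if_neg (by simp [hstop]), add_zero]
    exact Finset.sum_congr rfl fun x _ => by simp only [isPeak_iff]; rfl
  have hT : chainVal (Phi f) (n + 1) = D + U := by
    rw [chainVal, hD, hU, ← Finset.sum_add_distrib]
    refine Finset.sum_congr rfl fun x hx => ?_
    rw [Finset.mem_range] at hx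
    rw [dif_pos hx]
    show (if (s (x + 1) != s x) then 1 else 0) = _
    cases h1 : s x <;> cases h2 : s (x + 1) <;> simp [h1, h2]
  have hUD : (U : ℤ) - (D : ℤ) = 1 := by
    have tele := Finset.sum_range_sub (fun x => if s x then (1 : ℤ) else 0) (n + 1)
    have e : ∀ x ∈ Finset.range (n + 1),
        ((fun x => if s x then (1 : ℤ) else 0) (x + 1)
          - (fun x => if s x then (1 : ℤ) else 0) x)
        = (if s x = false ∧ s (x + 1) = true then (1 : ℤ) else 0)
          - (if s x = true ∧ s (x + 1) = false then (1 : ℤ) else 0) := by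
      intro x _
      cases h1 : s x <;> cases h2 : s (x + 1) <;> simp [h1, h2]
    rw [Finset.sum_congr rfl e, Finset.sum_sub_distrib, hs0, hstop] at tele
    have hUc : (U : ℤ) = ∑ x ∈ Finset.range (n + 1),
        (if s x = false ∧ s (x + 1) = true then (1 : ℤ) else 0) := by
      rw [hU]; push_cast; rfl
    have hDc : (D : ℤ) = ∑ x ∈ Finset.range (n + 1),
        (if s x = true ∧ s (x + 1) = false then (1 : ℤ) else 0) := by
      rw [hD]; push_cast; rfl
    rw [hUc, hDc]
    simpa using tele
  have : U = D + 1 := by omega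
  omega

lemma phi_inj {n : ℕ} (f f' : Fin n → Bool) (h : Phi f = Phi f') : f = f' := by
  have key : ∀ i, i ≤ n + 1 → stepExt f i = stepExt f' i := by
    intro i
    induction i with
    | zero => intro _; rw [stepExt_zero, stepExt_zero]
    | succ j ih =>
      intro hj
      have h2 := ih (by omega)
      have h1 : Phi f ⟨j, by omega⟩ = Phi f' ⟨j, by omega⟩ := by rw [h]
      simp only [Phi] at h1
      revert h1
      rw [h2]
      cases stepExt f' j <;> cases hx : stepExt f (j + 1) <;>
        cases hy : stepExt f' (j + 1) <;> simp
  funext j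
  have := key ((j : ℕ) + 1) (by omega)
  rw [stepExt_mid f (by omega) (by omega), stepExt_mid f' (by omega) (by omega)] at this
  simpa using this

/-- `Φₙ`, restricted to Bernoulli paths with exactly `k` peaks, is a bijection
onto the set of simple chains of length `n+1` (encoded by their `0/1`
increments, starting at `0`) ending at height `2k+1`. -/
theorem phi_bijOn (n k : ℕ) (hk : k ≤ n / 2) :
    Set.BijOn (Phi (n := n))
      {f | numPeaks f = k}
      {g : Fin (n + 1) → Bool | chainVal g (n + 1) = 2 * k + 1} := by
  refine ⟨?_, ?_, ?_⟩
  · intro f hf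
    simp only [Set.mem_setOf_eq] at hf ⊢
    rw [chainVal_phi, hf]
  · intro f _ f' _ h
    exact phi_inj f f' h
  · intro g hg
    simp only [Set.mem_setOf_eq] at hg
    set f : Fin n → Bool := fun j => (chainVal g ((j : ℕ) + 1)) % 2 == 1 with hf
    have hstep : ∀ i, i ≤ n + 1 → stepExt f i = (chainVal g i % 2 == 1) := by
      intro i hi
      rcases Nat.eq_zero_or_pos i with h0 | h0
      · subst h0
        rw [stepExt_zero]
        simp [chainVal]
      rcases Nat.lt_or_ge i (n + 1) with hlt | hge
      · rw [stepExt_mid f h0 (by omega)]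
        simp only [hf]
        rw [Nat.sub_add_cancel h0]
      · have hi' : i = n + 1 := by omega
        subst hi'
        rw [stepExt_top f le_rfl, hg]
        have h1 : (2 * k + 1) % 2 = 1 := by omega
        rw [h1]
        rfl
    have hPhi : Phi f = g := by
      funext i
      have hi := i.isLt
      have e1 := hstep ((i : ℕ) + 1) (by omega)
      have e2 := hstep (i : ℕ) (by omega)
      simp only [Phi]
      rw [e1, e2, chainVal_succ, dif_pos hi, Fin.eta]
      cases hgi : g i
      · simp [hgi]
      · rcases Nat.mod_two_eq_zero_or_one (chainVal g (i : ℕ)) with h2 | h2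
        · have h3 : (chainVal g (i : ℕ) + 1) % 2 = 1 := by omega
          simp [hgi, h2, h3]
        · have h3 : (chainVal g (i : ℕ) + 1) % 2 = 0 := by omega
          simp [hgi, h2, h3]
    have hnum := chainVal_phi f
    rw [hPhi, hg] at hnum
    exact ⟨f, (by omega : numPeaks f = k), hPhi⟩
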